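/- Let $a=x_1<x_2<\dots<x_N=b$ be equispaced nodes with spacing $h=(b-a)/(N-1)$, and let $S:[a,b]\to[-1,1]$ be the map sending $x_i$ to the Chebyshev–Lobatto node $\cos((N-i)\pi/(N-1))$, extended so that $S(x)=\cos\big(\pi\frac{b-x}{b-a}\big)$. Then the quadrature weights of the interpolatory rule obtained by integrating the mapped polynomial interpolant, $\int_a^b \ell_i(S(x))\,dx$ where $\ell_i$ are the Lagrange basis polynomials at the Chebyshev–Lobatto nodes, equal the composite trapezoidal weights: $w_1=w_N=h/2$ and $w_i=h$ for $1<i<N$. -/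

import Mathlib

open Polynomial Polynomial.Chebyshev in
lemma chebLead : ∀ m : ℕ, (T ℝ ((m : ℤ) + 1)).natDegree = m + 1 ∧
    (T ℝ ((m : ℤ) + 1)).coeff (m + 1) = 2 ^ m := by
  intro m
  induction m using Nat.strong_induction_on with
  | _ m ih =>
    match m with
    | 0 => simp [T_one]
    | 1 =>
      have h2 : ((1 : ℕ) : ℤ) + 1 = 2 := by norm_num
      rw [h2, T_two]
      constructor
      · compute_degree!
      · simp [coeff_sub, coeff_one]
    | (m + 2) =>
      obtain ⟨hd1, hc1⟩ := ih (m + 1) (by omega)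
      obtain ⟨hd0, hc0⟩ := ih m (by omega)
      have e1 : ((m + 1 : ℕ) : ℤ) + 1 = (m : ℤ) + 2 := by push_cast; ring
      have e2 : ((m + 2 : ℕ) : ℤ) + 1 = ((m : ℤ) + 1) + 2 := by push_cast; ring
      rw [e1] at hd1 hc1
      rw [e2, T_add_two]
      have he3 : (m : ℤ) + 1 + 1 = (m : ℤ) + 2 := by ring
      rw [he3]
      set p : ℝ[X] := T ℝ ((m : ℤ) + 2) with hp
      set q : ℝ[X] := T ℝ ((m : ℤ) + 1) with hq
      have hpne : p ≠ 0 := fun h => by simp [h] at hc1; exact absurd hc1 (by positivity)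
      have hA : (2 * X * p : ℝ[X]) = Polynomial.C 2 * (X * p) := by
        rw [map_ofNat Polynomial.C 2]; ring
      have hXp : (X * p : ℝ[X]).natDegree = m + 3 := by
        rw [natDegree_X_mul hpne, hd1]
      have hdA : (2 * X * p : ℝ[X]).natDegree = m + 3 := by
        rw [hA, natDegree_C_mul (by norm_num : (2:ℝ) ≠ 0), hXp]
      have hcA : (2 * X * p : ℝ[X]).coeff (m + 3) = 2 ^ (m + 2) := by
        rw [hA, coeff_C_mul, show m + 3 = (m + 2) + 1 from rfl, coeff_X_mul, hc1]
        ring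
      have hqlt : q.natDegree < (2 * X * p : ℝ[X]).natDegree := by rw [hdA, hd0]; omega
      constructor
      · rw [natDegree_sub_eq_left_of_natDegree_lt hqlt, hdA]
      · rw [coeff_sub, hcA, Polynomial.coeff_eq_zero_of_natDegree_lt (by rw [hd0]; omega)]
        ring
open Real in
lemma trapsum (n k : ℕ) (hn : 1 ≤ n) (hk : 1 ≤ k) (hkn : k ≤ n) :
    ∑ j ∈ Finset.range (n + 1), Real.cos (k * j * π / n) = (1 + (-1 : ℝ) ^ k) / 2 := by
  set α : ℝ := k * π / n with hα
  have hn' : (0:ℝ) < n := by exact_mod_cast hn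
  have hs : 0 < Real.sin (α / 2) := by
    apply Real.sin_pos_of_pos_of_lt_pi
    · rw [hα]; positivity
    · rw [hα]
      rw [div_div]
      calc (k:ℝ) * π / (n * 2) ≤ n * π / (n * 2) := by
            apply div_le_div_of_nonneg_right ?_ (by positivity)
            exact mul_le_mul_of_nonneg_right (by exact_mod_cast hkn) Real.pi_pos.le
        _ < π := by
            rw [show (n:ℝ) * π / (n * 2) = π / 2 by field_simp]
            exact div_lt_self Real.pi_pos one_lt_two
  have tele : ∑ j ∈ Finset.range n,
      (Real.sin (((j:ℝ) + 1 - 1/2) * α) - Real.sin (((j:ℝ) - 1/2) * α))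
      = Real.sin (((n:ℝ) - 1/2) * α) - Real.sin (((0:ℝ) - 1/2) * α) := by
    have := Finset.sum_range_sub (fun j : ℕ => Real.sin (((j:ℝ) - 1/2) * α)) n
    simpa using this
  have term : ∀ j : ℕ,
      Real.sin (((j:ℝ) + 1 - 1/2) * α) - Real.sin (((j:ℝ) - 1/2) * α)
      = 2 * Real.sin (α / 2) * Real.cos ((j:ℝ) * α) := by
    intro j
    rw [Real.sin_sub_sin]
    congr 1
    · congr 1; ring
    · congr 1; ring
  have hna : (n:ℝ) * α = k * π := by rw [hα]; field_simp
  have e1 : Real.sin (((n:ℝ) - 1/2) * α) = -((-1)^k * Real.sin (α/2)) := by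
    have : ((n:ℝ) - 1/2) * α = (k:ℝ) * π - α/2 := by rw [sub_mul, hna]; ring
    rw [this, Real.sin_nat_mul_pi_sub]
  have e2 : Real.sin (((0:ℝ) - 1/2) * α) = -Real.sin (α/2) := by
    rw [show ((0:ℝ) - 1/2) * α = -(α/2) by ring, Real.sin_neg]
  have sumn : ∑ j ∈ Finset.range n, Real.cos ((j:ℝ) * α) = (1 - (-1:ℝ)^k) / 2 := by
    have h2 : ∑ j ∈ Finset.range n, 2 * Real.sin (α/2) * Real.cos ((j:ℝ) * α)
        = (1 - (-1:ℝ)^k) * Real.sin (α/2) := by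
      rw [← Finset.sum_congr rfl (fun j _ => (term j))]
      rw [tele, e1, e2]; ring
    rw [← Finset.mul_sum] at h2
    apply mul_left_cancel₀ (a := 2 * Real.sin (α/2)) (by positivity)
    rw [h2]; ring
  have cosn : Real.cos ((n:ℝ) * α) = (-1:ℝ)^k := by
    rw [hna]
    simpa using Real.cos_nat_mul_pi_sub 0 k
  have final : ∑ j ∈ Finset.range (n+1), Real.cos ((j:ℝ) * α) = (1 + (-1:ℝ)^k)/2 := by
    rw [Finset.sum_range_succ, sumn, cosn]; ring
  rw [← final]
  apply Finset.sum_congr rfl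
  intro j _
  congr 1
  rw [hα]; ring
open Real in
lemma intcos (k : ℕ) (hk : 1 ≤ k) : ∫ θ in (0:ℝ)..π, Real.cos (k * θ) = 0 := by
  have hk' : (k:ℝ) ≠ 0 := by positivity
  rw [intervalIntegral.integral_comp_mul_left (fun x => Real.cos x) hk']
  simp [Real.sin_nat_mul_pi]
open Real Polynomial in
lemma quadlem (n : ℕ) (hn : 1 ≤ n) (P : Polynomial ℝ) (hP : P.natDegree ≤ n) :
    ∫ θ in (0:ℝ)..π, P.eval (Real.cos θ)
      = (π / n) * ((∑ j ∈ Finset.range (n + 1), P.eval (Real.cos (j * π / n)))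
          - (P.eval (Real.cos 0) + P.eval (Real.cos π)) / 2) := by
  have hcont : ∀ R : Polynomial ℝ, Continuous fun θ : ℝ => R.eval (Real.cos θ) :=
    fun R => R.continuous.comp Real.continuous_cos
  have hint : ∀ R : Polynomial ℝ, IntervalIntegrable (fun θ => R.eval (Real.cos θ))
      MeasureTheory.volume 0 π := fun R => (hcont R).intervalIntegrable 0 π
  have hn' : (0:ℝ) < n := by exact_mod_cast hn
  -- main induction
  suffices H : ∀ m : ℕ, m ≤ n → ∀ Q : Polynomial ℝ, Q.natDegree ≤ m →
      ∫ θ in (0:ℝ)..π, Q.eval (Real.cos θ)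
        = (π / n) * ((∑ j ∈ Finset.range (n + 1), Q.eval (Real.cos (j * π / n)))
            - (Q.eval (Real.cos 0) + Q.eval (Real.cos π)) / 2) by
    exact H n le_rfl P hP
  intro m
  induction m with
  | zero =>
    intro _ Q hQ
    obtain ⟨c, rfl⟩ := Polynomial.natDegree_eq_zero.mp (Nat.le_zero.mp hQ)
    simp only [Polynomial.eval_C]
    rw [intervalIntegral.integral_const, Finset.sum_const, Finset.card_range]
    simp only [smul_eq_mul, nsmul_eq_mul]
    field_simp
    push_cast; ring
  | succ m ihm =>
    intro hmn Q hQ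
    set c : ℝ := Q.coeff (m + 1) with hc
    obtain ⟨hTd, hTc⟩ := chebLead m
    set Tm : ℝ[X] := Polynomial.Chebyshev.T ℝ ((m:ℤ) + 1) with hTm
    set R : ℝ[X] := Q - Polynomial.C (c / 2 ^ m) * Tm with hR
    have hRdeg : R.natDegree ≤ m := by
      rw [Polynomial.natDegree_le_iff_coeff_eq_zero]
      intro N hN
      rw [hR, Polynomial.coeff_sub, Polynomial.coeff_C_mul]
      rcases eq_or_lt_of_le (Nat.succ_le_of_lt hN) with h | h
      · rw [← h, hTc, ← hc]
        field_simp
        ring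
      · rw [Polynomial.coeff_eq_zero_of_natDegree_lt (lt_of_le_of_lt hQ h),
          Polynomial.coeff_eq_zero_of_natDegree_lt (by rw [hTd]; exact h)]
        ring
    have hQeq : Q = R + Polynomial.C (c / 2 ^ m) * Tm := by rw [hR]; ring
    -- evaluation of Tm
    have hTeval : ∀ θ : ℝ, Tm.eval (Real.cos θ) = Real.cos ((m + 1 : ℝ) * θ) := by
      intro θ
      rw [hTm]
      have := Polynomial.Chebyshev.T_real_cos θ ((m:ℤ) + 1)
      rw [this]
      norm_num
    -- integral of Tm is zero
    have hTint : ∫ θ in (0:ℝ)..π, Tm.eval (Real.cos θ) = 0 := by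
      rw [intervalIntegral.integral_congr (g := fun θ => Real.cos ((m+1:ℕ) * θ))]
      · exact intcos (m+1) (by omega)
      · intro θ _
        simp only [hTeval]
        push_cast
        ring_nf
    -- quadrature of Tm is zero
    have hTq : (∑ j ∈ Finset.range (n + 1), Tm.eval (Real.cos (j * π / n)))
        - (Tm.eval (Real.cos 0) + Tm.eval (Real.cos π)) / 2 = 0 := by
      have hsum : ∑ j ∈ Finset.range (n + 1), Tm.eval (Real.cos (j * π / n))
          = (1 + (-1:ℝ)^(m+1)) / 2 := by
        rw [← trapsum n (m+1) hn (by omega) (by omega)]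
        apply Finset.sum_congr rfl
        intro j _
        rw [hTeval]
        congr 1
        push_cast
        ring
      have h0 : Tm.eval (Real.cos 0) = 1 := by
        rw [hTeval]; norm_num
      have hpi : Tm.eval (Real.cos π) = (-1:ℝ)^(m+1) := by
        rw [hTeval]
        have := Real.cos_nat_mul_pi_sub 0 (m+1)
        simp only [Real.cos_zero, mul_one, sub_zero] at this
        rw [← this]
        push_cast
        ring_nf
      rw [hsum, h0, hpi]
      ring
    -- put things together
    have hRint := ihm (by omega) R hRdeg
    calc ∫ θ in (0:ℝ)..π, Q.eval (Real.cos θ)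
        = ∫ θ in (0:ℝ)..π, (R.eval (Real.cos θ) + (c / 2^m) * Tm.eval (Real.cos θ)) := by
          apply intervalIntegral.integral_congr
          intro θ _
          rw [hQeq]
          simp
      _ = (∫ θ in (0:ℝ)..π, R.eval (Real.cos θ))
            + (c / 2^m) * ∫ θ in (0:ℝ)..π, Tm.eval (Real.cos θ) := by
          rw [intervalIntegral.integral_add (hint R) (((hint Tm).const_mul _)),
            intervalIntegral.integral_const_mul]
      _ = (π / n) * ((∑ j ∈ Finset.range (n + 1), R.eval (Real.cos (j * π / n)))
            - (R.eval (Real.cos 0) + R.eval (Real.cos π)) / 2) + 0 := by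
          rw [hRint, hTint]; ring
      _ = (π / n) * ((∑ j ∈ Finset.range (n + 1), Q.eval (Real.cos (j * π / n)))
            - (Q.eval (Real.cos 0) + Q.eval (Real.cos π)) / 2) := by
          have hev : ∀ t : ℝ, Q.eval t = R.eval t + (c / 2^m) * Tm.eval t := by
            intro t; rw [hQeq]; simp
          simp only [hev]
          rw [Finset.sum_add_distrib, ← Finset.mul_sum]
          linear_combination (-(π / (n:ℝ)) * (c / 2^m)) * hTq
open Real in
/-- Integrating the mapped Lagrange basis (equispaced nodes mapped to
Chebyshev–Lobatto nodes) yields exactly the composite trapezoidal weights. -/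
theorem stmt_16 (N : ℕ) (hN : 2 ≤ N) (a b : ℝ) (hab : a < b)
    (x : Fin N → ℝ) (hx : ∀ i : Fin N, x i = a + i * ((b - a) / (N - 1)))
    (y : Fin N → ℝ) (hy : ∀ i : Fin N, y i = Real.cos ((N - 1 - (i : ℕ)) * π / (N - 1)))
    (S : ℝ → ℝ) (hS : ∀ t, S t = Real.cos (π * (b - t) / (b - a)))
    (w : Fin N → ℝ)
    (hw : ∀ i, w i = ∫ t in a..b, (Lagrange.basis Finset.univ y i).eval (S t)) :
    ∀ i : Fin N,
      w i = if (i : ℕ) = 0 ∨ (i : ℕ) = N - 1 then (b - a) / (N - 1) / 2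
        else (b - a) / (N - 1) := by
  intro i
  set n := N - 1 with hn'
  have hn : 1 ≤ n := by omega
  have hNn : N = n + 1 := by omega
  have hnR : ((N : ℝ) - 1) = (n : ℝ) := by rw [hNn]; push_cast; ring
  have hπ := Real.pi_pos
  have hnpos : (0 : ℝ) < n := by exact_mod_cast hn
  have hba : (0 : ℝ) < b - a := sub_pos.mpr hab
  -- node description with natural subtraction
  have hy' : ∀ j : Fin N, y j = Real.cos (((n - (j : ℕ) : ℕ) : ℝ) * π / n) := by
    intro j
    rw [hy j, hnR]
    have hj : (j : ℕ) ≤ n := by have := j.isLt; omega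
    rw [Nat.cast_sub hj]
  -- injectivity of the nodes
  have hyinj : Set.InjOn y ↑(Finset.univ : Finset (Fin N)) := by
    intro i1 _ i2 _ h
    rw [hy' i1, hy' i2] at h
    have mem : ∀ j : Fin N, ((n - (j : ℕ) : ℕ) : ℝ) * π / n ∈ Set.Icc 0 π := by
      intro j
      constructor
      · positivity
      · rw [div_le_iff₀ hnpos]
        have : ((n - (j : ℕ) : ℕ) : ℝ) ≤ n := by exact_mod_cast Nat.sub_le n _
        nlinarith
    have h2 := Real.injOn_cos (mem i1) (mem i2) h
    rw [mul_div_assoc, mul_div_assoc] at h2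
    have h3 := mul_right_cancel₀ (ne_of_gt (by positivity : (0:ℝ) < π / n)) h2
    have h4 : n - (i1 : ℕ) = n - (i2 : ℕ) := by exact_mod_cast h3
    have l1 : (i1 : ℕ) < N := i1.isLt
    have l2 : (i2 : ℕ) < N := i2.isLt
    exact Fin.ext (by omega)
  set P : Polynomial ℝ := Lagrange.basis Finset.univ y i with hP
  have hPdeg : P.natDegree ≤ n := by
    rw [hP, Lagrange.natDegree_basis hyinj (Finset.mem_univ i)]
    simp [hn']
  -- delta property
  have hevalnode : ∀ j : Fin N, P.eval (y j) = if j = i then 1 else 0 := by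
    intro j
    by_cases h : j = i
    · rw [h, if_pos rfl, hP]
      exact Lagrange.eval_basis_self hyinj (Finset.mem_univ i)
    · rw [if_neg h, hP]
      exact Lagrange.eval_basis_of_ne (Ne.symm h) (Finset.mem_univ j)
  have hiN : (i : ℕ) < N := i.isLt
  -- identify quadrature points with nodes
  have hnode : ∀ j : ℕ, j ≤ n → Real.cos ((j : ℝ) * π / n) = y ⟨n - j, by omega⟩ := by
    intro j hj
    rw [hy' ⟨n - j, by omega⟩]
    congr 3
    simp [Nat.sub_sub_self hj]
  have hsum : ∑ j ∈ Finset.range (n + 1), P.eval (Real.cos ((j : ℝ) * π / n)) = 1 := by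
    have hterm : ∀ j ∈ Finset.range (n + 1),
        P.eval (Real.cos ((j : ℝ) * π / n)) = if j = n - (i : ℕ) then (1:ℝ) else 0 := by
      intro j hj
      rw [Finset.mem_range] at hj
      rw [hnode j (by omega), hevalnode]
      by_cases hji : j = n - (i : ℕ)
      · rw [if_pos hji, if_pos]
        exact Fin.ext (by simp; omega)
      · rw [if_neg hji, if_neg]
        intro hc
        have : n - j = (i : ℕ) := by simpa using congrArg Fin.val hc
        omega
    rw [Finset.sum_congr rfl hterm, Finset.sum_ite_eq' (Finset.range (n+1)) (n - (i:ℕ))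
      (fun _ => (1:ℝ)), if_pos (Finset.mem_range.mpr (by omega))]
  have h0 : P.eval (Real.cos 0) = if (i : ℕ) = n then (1:ℝ) else 0 := by
    have hc0 : Real.cos 0 = y ⟨n, by omega⟩ := by
      rw [hy' ⟨n, by omega⟩]
      norm_num
    rw [hc0, hevalnode]
    by_cases h : (i : ℕ) = n
    · rw [if_pos, if_pos h]
      exact Fin.ext (by simp [h])
    · rw [if_neg, if_neg h]
      intro hc
      exact h (by simpa using (congrArg Fin.val hc).symm)
  have hpi : P.eval (Real.cos π) = if (i : ℕ) = 0 then (1:ℝ) else 0 := by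
    have hcpi : Real.cos π = y ⟨0, by omega⟩ := by
      rw [hy' ⟨0, by omega⟩]
      congr 1
      rw [eq_comm]
      simp only [Nat.sub_zero]
      field_simp
    rw [hcpi, hevalnode]
    by_cases h : (i : ℕ) = 0
    · rw [if_pos, if_pos h]
      exact Fin.ext (by simp [h])
    · rw [if_neg, if_neg h]
      intro hc
      exact h (by simpa using (congrArg Fin.val hc).symm)
  -- change of variables
  set g : ℝ → ℝ := fun θ => P.eval (Real.cos θ) with hg
  have hcc : (0:ℝ) < π / (b - a) := by positivity
  have hchg : w i = (π / (b - a))⁻¹ * ∫ θ in (0:ℝ)..π, g θ := by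
    rw [hw i, ← hP]
    have hstep1 : ∀ t : ℝ, P.eval (S t) = g (π / (b - a) * t - π / (b - a) * b) := by
      intro t
      rw [hS t, hg]
      simp only []
      congr 1
      rw [show π / (b - a) * t - π / (b - a) * b = -(π * (b - t) / (b - a)) by field_simp; ring,
        Real.cos_neg]
    rw [intervalIntegral.integral_congr (g := fun t => g (π / (b-a) * t - π / (b-a) * b))
      (fun t _ => hstep1 t)]
    rw [intervalIntegral.integral_comp_mul_sub g (ne_of_gt hcc) (π / (b - a) * b)]
    have e1 : π / (b - a) * a - π / (b - a) * b = -π := by field_simp; ring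
    have e2 : π / (b - a) * b - π / (b - a) * b = 0 := by ring
    rw [e1, e2, smul_eq_mul]
    congr 1
    have := intervalIntegral.integral_comp_neg (a := (0:ℝ)) (b := π) g
    simp only [neg_zero] at this
    rw [← this]
    apply intervalIntegral.integral_congr
    intro t _
    simp [hg, Real.cos_neg]
  have hquad := quadlem n hn P hPdeg
  rw [hchg, hg] at *
  rw [hquad, hsum, h0, hpi, hnR]
  have hNn' : N - 1 = n := hn'.symm ▸ rfl
  by_cases hcase : (i : ℕ) = 0 ∨ (i : ℕ) = N - 1
  · rw [if_pos hcase]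
    rcases hcase with h | h
    · rw [if_pos h, if_neg (by omega)]
      field_simp
      try ring
    · rw [if_pos (by omega : (i:ℕ) = n), if_neg (by omega)]
      field_simp
      try ring
  · rw [if_neg hcase]
    push_neg at hcase
    rw [if_neg (by omega), if_neg (by omega)]
    field_simp
    try ring
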